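/- Fix k ≥ 1 and letters a₁,…,a_k ∈ Σ with a_i ≠ a_{i+1} for all 1 ≤ i < k, let S = {a₁,…,a_k}, and let P↗(α) for α ∈ S be the up projectors of A[a₁,…,a_k], with P↗(c) := I for c ∈ Σ∖S. For a word w = w₁⋯w_n ∈ Σ* set π := e₁ · P↗(w₁) ⋯ P↗(w_n) ∈ ℝ^{1×(k+1)}. Then: (1) if w ∈ L[a₁,…,a_k] = Σ* a₁ Σ* ⋯ Σ* a_k Σ*, then (π)_i > 0 for every 1 ≤ i ≤ k+1; and (2) for all 1 ≤ j ≤ i ≤ k+1, if (π)_i > 0 then (π)_j ≥ 2^{−k}. -/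

import Mathlib

/-- The "up" orthogonal projector `P↗(α)` of dimension `(k+1)×(k+1)` associated with
the word `as = a₁⋯a_k` and the letter `α`: writing `j₁^{(α)} < ⋯ < j_{#α}^{(α)}` for
the (1-based) positions of `α` in `as`, the entry `(r,s)` is `1` if `r = s` and `r`
belongs to no block `{jᵢ^{(α)}, jᵢ^{(α)}+1}`, `1/2` if `r` and `s` belong to a common
block `{jᵢ^{(α)}, jᵢ^{(α)}+1}`, and `0` otherwise.  (Indices here are 0-based: the
block of a 0-based position `q` with `as.get q = α` is `{q, q+1}`.) -/
noncomputable def upProj {σ : Type} [DecidableEq σ] (as : List σ) (α : σ) :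
    Matrix (Fin (as.length + 1)) (Fin (as.length + 1)) ℝ :=
  Matrix.of fun r s =>
    if ∃ q : Fin as.length, as.get q = α ∧
        (r = q.castSucc ∨ r = q.succ) ∧ (s = q.castSucc ∨ s = q.succ) then 1 / 2
    else if r = s then 1 else 0

/-- The "down" orthogonal projector `P↘(α)` of dimension `(k+1)×(k+1)` associated
with the word `as = a₁⋯a_k` and the letter `α`: the entry `(r,s)` is `1/2` if
`r = s` and `r` belongs to some block `{jᵢ^{(α)}, jᵢ^{(α)}+1}`, `-1/2` if `r ≠ s` and
`r, s` belong to a common block, and `0` otherwise. -/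
noncomputable def downProj {σ : Type} [DecidableEq σ] (as : List σ) (α : σ) :
    Matrix (Fin (as.length + 1)) (Fin (as.length + 1)) ℝ :=
  Matrix.of fun r s =>
    if ∃ q : Fin as.length, as.get q = α ∧
        (r = q.castSucc ∨ r = q.succ) ∧ (s = q.castSucc ∨ s = q.succ) then
      (if r = s then 1 / 2 else -(1 / 2))
    else 0

/-- The first standard basis row vector `e₁ ∈ ℝ^{1×(k+1)}`. -/
noncomputable def e1 {n : ℕ} : Matrix (Fin 1) (Fin (n + 1)) ℝ :=
  Matrix.of fun _ i => if i = 0 then 1 else 0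

/-- `π = e₁ · P↗(w₁) ⋯ P↗(w_n)` : the row vector obtained from `e₁` by applying the
up projectors of the letters of `w` (note `upProj as c` is the identity matrix for
letters `c` not occurring in `as`). -/
noncomputable def upState {σ : Type} [DecidableEq σ] (as : List σ) (w : List σ) :
    Matrix (Fin 1) (Fin (as.length + 1)) ℝ :=
  e1 * (w.map fun c => upProj as c).prod

section AuxUp

variable {σ : Type} [DecidableEq σ]

lemma chain'_get_ne {as : List σ} (hchain : as.Chain' (· ≠ ·)) {q q' : Fin as.length}
    (h : (q : ℕ) + 1 = (q' : ℕ)) : as.get q ≠ as.get q' := by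
  have h1 : (q : ℕ) < as.length - 1 := by have := q'.isLt; omega
  have key := List.isChain_iff_getElem.mp hchain q (by have := q'.isLt; omega)
  intro heq
  apply key
  obtain ⟨q', hq'⟩ := q'
  simp only at h
  subst h
  simpa [List.get_eq_getElem] using heq

lemma block_unique {as : List σ} (hchain : as.Chain' (· ≠ ·)) {q q' : Fin as.length}
    (hl : as.get q = as.get q') {s : Fin (as.length + 1)}
    (hs : s = q.castSucc ∨ s = q.succ) (hs' : s = q'.castSucc ∨ s = q'.succ) : q = q' := by
  have hs1 : (s : ℕ) = q ∨ (s : ℕ) = q + 1 := by rcases hs with h | h <;> simp [h]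
  have hs2 : (s : ℕ) = q' ∨ (s : ℕ) = q' + 1 := by rcases hs' with h | h <;> simp [h]
  by_contra hne
  have hne' : (q : ℕ) ≠ (q' : ℕ) := fun h => hne (Fin.ext h)
  have hcase : (q : ℕ) + 1 = q' ∨ (q' : ℕ) + 1 = q := by omega
  rcases hcase with h | h
  · exact chain'_get_ne hchain h hl
  · exact chain'_get_ne hchain h hl.symm

lemma block_lt {as : List σ} (hchain : as.Chain' (· ≠ ·)) {q q' : Fin as.length}
    (hl : as.get q = as.get q') (hne : q ≠ q') {i j : Fin (as.length + 1)}
    (hi : i = q.castSucc ∨ i = q.succ) (hj : j = q'.castSucc ∨ j = q'.succ)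
    (hij : i ≤ j) : (q : ℕ) + 1 ≤ (q' : ℕ) := by
  have hi' : (i : ℕ) = q ∨ (i : ℕ) = q + 1 := by rcases hi with h | h <;> simp [h]
  have hj' : (j : ℕ) = q' ∨ (j : ℕ) = q' + 1 := by rcases hj with h | h <;> simp [h]
  have hij' : (i : ℕ) ≤ (j : ℕ) := hij
  have hne' : (q : ℕ) ≠ (q' : ℕ) := fun h => hne (Fin.ext h)
  have hadj : (q' : ℕ) + 1 ≠ (q : ℕ) := fun h => chain'_get_ne hchain h hl.symm
  omega

lemma mul_upProj_of_not_mem (as : List σ) (c : σ) (v : Matrix (Fin 1) (Fin (as.length + 1)) ℝ)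
    {s : Fin (as.length + 1)}
    (h : ¬ ∃ q : Fin as.length, as.get q = c ∧ (s = q.castSucc ∨ s = q.succ)) :
    (v * upProj as c) 0 s = v 0 s := by
  rw [Matrix.mul_apply]
  have hterm : ∀ r : Fin (as.length + 1),
      v 0 r * upProj as c r s = if r = s then v 0 r else 0 := by
    intro r
    have hnot : ¬ ∃ q : Fin as.length, as.get q = c ∧
        (r = q.castSucc ∨ r = q.succ) ∧ (s = q.castSucc ∨ s = q.succ) := by
      rintro ⟨q, hq, _, hsq⟩; exact h ⟨q, hq, hsq⟩
    simp only [upProj, Matrix.of_apply, if_neg hnot]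
    split <;> simp
  rw [Finset.sum_congr rfl fun r _ => hterm r]
  simp

lemma mul_upProj_of_mem (as : List σ) (c : σ) (hchain : as.Chain' (· ≠ ·))
    (v : Matrix (Fin 1) (Fin (as.length + 1)) ℝ) {q : Fin as.length} (hq : as.get q = c)
    {s : Fin (as.length + 1)} (hs : s = q.castSucc ∨ s = q.succ) :
    (v * upProj as c) 0 s = (v 0 q.castSucc + v 0 q.succ) / 2 := by
  rw [Matrix.mul_apply]
  have hne : q.castSucc ≠ q.succ := (Fin.castSucc_lt_succ (i := q)).ne
  have hval : ∀ r : Fin (as.length + 1), upProj as c r s =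
      if r = q.castSucc ∨ r = q.succ then 1 / 2 else 0 := by
    intro r
    by_cases hr : r = q.castSucc ∨ r = q.succ
    · rw [if_pos hr]
      simp only [upProj, Matrix.of_apply]
      rw [if_pos ⟨q, hq, hr, hs⟩]
    · rw [if_neg hr]
      simp only [upProj, Matrix.of_apply]
      rw [if_neg, if_neg]
      · rintro rfl; exact hr hs
      · rintro ⟨q', hq', hr', hs'⟩
        have hqq : q' = q := block_unique hchain (hq'.trans hq.symm) hs' hs
        subst hqq; exact hr hr'
  have key : ∑ r, v 0 r * upProj as c r s
      = ∑ r ∈ ({q.castSucc, q.succ} : Finset (Fin (as.length + 1))), v 0 r * upProj as c r s := by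
    refine (Finset.sum_subset (Finset.subset_univ _) ?_).symm
    intro r _ hrmem
    simp only [Finset.mem_insert, Finset.mem_singleton] at hrmem
    rw [hval r, if_neg (by tauto), mul_zero]
  rw [key, Finset.sum_pair hne, hval, hval, if_pos (Or.inl rfl), if_pos (Or.inr rfl)]
  ring

lemma upState_nil (as : List σ) : upState as [] = e1 := by
  simp [upState]
  exact Matrix.mul_one _

lemma upState_append (as : List σ) (w : List σ) (c : σ) :
    upState as (w ++ [c]) = upState as w * upProj as c := by
  simp [upState, Matrix.mul_assoc]
  exact (Matrix.mul_assoc _ _ _).symm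

lemma step_inv (as : List σ) (hchain : as.Chain' (· ≠ ·)) (c : σ)
    (v : Matrix (Fin 1) (Fin (as.length + 1)) ℝ) (m : Fin (as.length + 1))
    (hmono : ∀ i j : Fin (as.length + 1), i ≤ j → v 0 j ≤ v 0 i)
    (hzero : ∀ i, m < i → v 0 i = 0)
    (hlow : (2 : ℝ) ^ (-(m : ℤ)) ≤ v 0 m)
    (hnn : ∀ i, 0 ≤ v 0 i) :
    ∃ m' : Fin (as.length + 1),
      (∀ i j : Fin (as.length + 1), i ≤ j →
        (v * upProj as c) 0 j ≤ (v * upProj as c) 0 i) ∧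
      (∀ i, m' < i → (v * upProj as c) 0 i = 0) ∧
      (2 : ℝ) ^ (-(m' : ℤ)) ≤ (v * upProj as c) 0 m' ∧
      (∀ i, 0 ≤ (v * upProj as c) 0 i) ∧
      (m : ℕ) ≤ (m' : ℕ) ∧
      (∀ hq : (m : ℕ) < as.length, as.get ⟨(m : ℕ), hq⟩ = c → (m : ℕ) + 1 ≤ (m' : ℕ)) := by
  have hcs : ∀ q : Fin as.length, v 0 q.succ ≤ v 0 q.castSucc :=
    fun q => hmono _ _ (Fin.castSucc_lt_succ (i := q)).le
  -- monotonicity of the new vector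
  have humono : ∀ i j : Fin (as.length + 1), i ≤ j →
      (v * upProj as c) 0 j ≤ (v * upProj as c) 0 i := by
    intro i j hij
    by_cases hi : ∃ q : Fin as.length, as.get q = c ∧ (i = q.castSucc ∨ i = q.succ)
    · obtain ⟨q, hq, hiq⟩ := hi
      rw [mul_upProj_of_mem as c hchain v hq hiq]
      by_cases hj : ∃ q' : Fin as.length, as.get q' = c ∧ (j = q'.castSucc ∨ j = q'.succ)
      · obtain ⟨q', hq', hjq⟩ := hj
        rw [mul_upProj_of_mem as c hchain v hq' hjq]
        by_cases hqq : q = q'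
        · subst hqq; exact le_refl _
        · have hlt : (q : ℕ) + 1 ≤ (q' : ℕ) :=
            block_lt hchain (hq.trans hq'.symm) hqq hiq hjq hij
          have h1 : v 0 q'.castSucc ≤ v 0 q.succ := by
            apply hmono; rw [Fin.le_def]; simpa using hlt
          have h2 : v 0 q'.succ ≤ v 0 q'.castSucc := hcs q'
          have h3 : v 0 q.succ ≤ v 0 q.castSucc := hcs q
          linarith
      · rw [mul_upProj_of_not_mem as c v hj]
        have hjq : ¬((j : ℕ) = q ∨ (j : ℕ) = q + 1) := by
          intro hcon
          apply hj
          refine ⟨q, hq, ?_⟩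
          rcases hcon with h | h
          · exact Or.inl (Fin.ext (by simpa using h))
          · exact Or.inr (Fin.ext (by simpa using h))
        have hi' : (i : ℕ) = q ∨ (i : ℕ) = q + 1 := by rcases hiq with h | h <;> simp [h]
        have hij' : (i : ℕ) ≤ (j : ℕ) := hij
        have hge : (q : ℕ) + 1 ≤ (j : ℕ) := by omega
        have h1 : v 0 j ≤ v 0 q.succ := by
          apply hmono; rw [Fin.le_def]; simpa using hge
        have h2 : v 0 q.succ ≤ v 0 q.castSucc := hcs q
        linarith
    · rw [mul_upProj_of_not_mem as c v hi]
      by_cases hj : ∃ q' : Fin as.length, as.get q' = c ∧ (j = q'.castSucc ∨ j = q'.succ)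
      · obtain ⟨q', hq', hjq⟩ := hj
        rw [mul_upProj_of_mem as c hchain v hq' hjq]
        have hiq : ¬((i : ℕ) = q' ∨ (i : ℕ) = q' + 1) := by
          intro hcon
          apply hi
          refine ⟨q', hq', ?_⟩
          rcases hcon with h | h
          · exact Or.inl (Fin.ext (by simpa using h))
          · exact Or.inr (Fin.ext (by simpa using h))
        have hj' : (j : ℕ) = q' ∨ (j : ℕ) = q' + 1 := by rcases hjq with h | h <;> simp [h]
        have hij' : (i : ℕ) ≤ (j : ℕ) := hij
        have hle : (i : ℕ) ≤ (q' : ℕ) := by omega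
        have h1 : v 0 q'.castSucc ≤ v 0 i := by
          apply hmono; rw [Fin.le_def]; simpa using hle
        have h2 : v 0 q'.succ ≤ v 0 q'.castSucc := hcs q'
        linarith
      · rw [mul_upProj_of_not_mem as c v hj]
        exact hmono _ _ hij
  have hunn : ∀ s, 0 ≤ (v * upProj as c) 0 s := by
    intro s
    by_cases hs : ∃ q : Fin as.length, as.get q = c ∧ (s = q.castSucc ∨ s = q.succ)
    · obtain ⟨q, hq, hsq⟩ := hs
      rw [mul_upProj_of_mem as c hchain v hq hsq]
      have := hnn q.castSucc; have := hnn q.succ; linarith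
    · rw [mul_upProj_of_not_mem as c v hs]
      exact hnn s
  by_cases hex : ∃ q : Fin as.length, (q : ℕ) = (m : ℕ) ∧ as.get q = c
  · obtain ⟨q0, hq0m, hq0c⟩ := hex
    refine ⟨q0.succ, humono, ?_, ?_, hunn, by simp [hq0m, Fin.val_succ], ?_⟩
    · -- zeros above q0.succ
      intro i hi
      have hi' : (m : ℕ) + 2 ≤ (i : ℕ) := by
        have := Fin.lt_def.mp hi; simp [Fin.val_succ] at this; omega
      by_cases hs : ∃ q : Fin as.length, as.get q = c ∧ (i = q.castSucc ∨ i = q.succ)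
      · obtain ⟨q, hq, hiq⟩ := hs
        rw [mul_upProj_of_mem as c hchain v hq hiq]
        have hiv : (i : ℕ) = q ∨ (i : ℕ) = q + 1 := by rcases hiq with h | h <;> simp [h]
        have hqm : (m : ℕ) < (q : ℕ) := by omega
        have hz1 : v 0 q.castSucc = 0 := hzero _ (by rw [Fin.lt_def]; simpa using hqm)
        have hz2 : v 0 q.succ = 0 := hzero _ (by rw [Fin.lt_def]; simp; omega)
        rw [hz1, hz2]; norm_num
      · rw [mul_upProj_of_not_mem as c v hs]
        exact hzero i (by rw [Fin.lt_def]; omega)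
    · -- lower bound at q0.succ
      have heq : (v * upProj as c) 0 q0.succ = (v 0 q0.castSucc + v 0 q0.succ) / 2 :=
        mul_upProj_of_mem as c hchain v hq0c (Or.inr rfl)
      rw [heq]
      have hm : q0.castSucc = m := Fin.ext (by simpa using hq0m)
      have h1 : (2 : ℝ) ^ (-(m : ℤ)) ≤ v 0 q0.castSucc := by rw [hm]; exact hlow
      have h2 : 0 ≤ v 0 q0.succ := hnn _
      have h3 : ((q0.succ : Fin (as.length + 1)) : ℕ) = (m : ℕ) + 1 := by
        simp [Fin.val_succ, hq0m]
      rw [h3]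
      have h4 : (2 : ℝ) ^ (-(((m : ℕ) + 1 : ℕ) : ℤ)) = (2 : ℝ) ^ (-(m : ℤ)) / 2 := by
        push_cast
        rw [neg_add, zpow_add₀ (two_ne_zero)]
        norm_num
        ring
      rw [h4]
      linarith
    · intro _ _
      simp [Fin.val_succ, hq0m]
  · refine ⟨m, humono, ?_, ?_, hunn, le_refl _, ?_⟩
    · intro i hi
      have hi' : (m : ℕ) < (i : ℕ) := Fin.lt_def.mp hi
      by_cases hs : ∃ q : Fin as.length, as.get q = c ∧ (i = q.castSucc ∨ i = q.succ)
      · obtain ⟨q, hq, hiq⟩ := hs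
        rw [mul_upProj_of_mem as c hchain v hq hiq]
        have hiv : (i : ℕ) = q ∨ (i : ℕ) = q + 1 := by rcases hiq with h | h <;> simp [h]
        have hqm : (m : ℕ) < (q : ℕ) := by
          rcases hiv with h | h
          · omega
          · rcases Nat.lt_or_ge (m : ℕ) (q : ℕ) with h' | h'
            · exact h'
            · exfalso
              have hqm' : (q : ℕ) = (m : ℕ) := by omega
              exact hex ⟨q, hqm', hq⟩
        have hz1 : v 0 q.castSucc = 0 := hzero _ (by rw [Fin.lt_def]; simpa using hqm)
        have hz2 : v 0 q.succ = 0 := hzero _ (by rw [Fin.lt_def]; simp; omega)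
        rw [hz1, hz2]; norm_num
      · rw [mul_upProj_of_not_mem as c v hs]
        exact hzero i hi
    · by_cases hs : ∃ q : Fin as.length, as.get q = c ∧ (m = q.castSucc ∨ m = q.succ)
      · obtain ⟨q, hq, hmq⟩ := hs
        rcases hmq with h | h
        · exfalso
          exact hex ⟨q, by rw [h]; simp, hq⟩
        · rw [mul_upProj_of_mem as c hchain v hq (Or.inr h)]
          have h1 : v 0 m ≤ v 0 q.castSucc := by rw [h]; exact hcs q
          have h2 : v 0 q.succ = v 0 m := by rw [h]
          linarith
      · rw [mul_upProj_of_not_mem as c v hs]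
        exact hlow
    · intro hq hgc
      exact absurd ⟨⟨(m : ℕ), hq⟩, rfl, hgc⟩ hex

lemma main_inv (as : List σ) (hchain : as.Chain' (· ≠ ·)) (w : List σ) :
    ∃ m : Fin (as.length + 1),
      (∀ i j : Fin (as.length + 1), i ≤ j → upState as w 0 j ≤ upState as w 0 i) ∧
      (∀ i, m < i → upState as w 0 i = 0) ∧
      (2 : ℝ) ^ (-(m : ℤ)) ≤ upState as w 0 m ∧
      (∀ i, 0 ≤ upState as w 0 i) ∧
      (∀ t : ℕ, t ≤ as.length → (as.take t).Sublist w → t ≤ (m : ℕ)) := by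
  induction w using List.reverseRecOn with
  | nil =>
    refine ⟨0, ?_, ?_, ?_, ?_, ?_⟩
    · intro i j hij
      rw [upState_nil]
      by_cases hi : i = 0
      · by_cases hj : j = 0 <;> simp [e1, hi, hj]
      · have hj : j ≠ 0 := fun h => hi (le_antisymm (h ▸ hij) (Fin.zero_le i))
        simp [e1, hi, hj]
    · intro i hi
      rw [upState_nil]
      simp [e1, hi.ne']
    · rw [upState_nil]; simp [e1]
    · intro i
      rw [upState_nil]
      simp only [e1, Matrix.of_apply]
      split <;> norm_num
    · intro t ht hsub
      have h1 := List.sublist_nil.mp hsub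
      have h2 : t ⊓ as.length = 0 := by
        simpa [List.length_take] using congrArg List.length h1
      simp only [Fin.val_zero]
      omega
  | append_singleton w c ih =>
    obtain ⟨m, hmono, hzero, hlow, hnn, hgreedy⟩ := ih
    obtain ⟨m', h1, h2, h3, h4, hm, hstep⟩ :=
      step_inv as hchain c (upState as w) m hmono hzero hlow hnn
    rw [upState_append] at *
    refine ⟨m', h1, h2, h3, h4, ?_⟩
    intro t ht hsub
    rcases List.sublist_append_iff.mp hsub with ⟨l₁, l₂, heq, hl₁, hl₂⟩
    have hl₂' : l₂ = [] ∨ l₂ = [c] := by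
      cases hl₂ <;> simp_all [List.sublist_nil]
    rcases hl₂' with rfl | rfl
    · rw [List.append_nil] at heq
      subst heq
      exact (hgreedy t ht hl₁).trans hm
    · cases t with
      | zero => simp at heq
      | succ t' =>
        have hlen : (as.take (t' + 1)).length = t' + 1 := by
          rw [List.length_take]; omega
        have hl1len : l₁.length = t' := by
          have hlenc := congrArg List.length heq
          simp [List.length_take] at hlenc
          omega
        have hl1 : l₁ = as.take t' := by
          have hx : as.take t' = (as.take (t' + 1)).take t' := by
            rw [List.take_take, min_eq_left (by omega)]
          rw [hx, heq, ← hl1len, List.take_left]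
        have ht1 : t' < as.length := by omega
        have hgetc : as.get ⟨t', ht1⟩ = c := by
          have hseq : as.take (t' + 1) = as.take t' ++ [c] := by rw [heq, hl1]
          rw [List.take_succ] at hseq
          have h5 : (as[t']?).toList = [c] := List.append_cancel_left hseq
          rw [List.getElem?_eq_getElem ht1] at h5
          simp at h5
          rw [List.get_eq_getElem]
          exact h5
        have htm : t' ≤ (m : ℕ) := by
          apply hgreedy t' (by omega)
          rw [← hl1]; exact hl₁
        by_cases hcase : t' = (m : ℕ)
        · have hmlt : (m : ℕ) < as.length := by omega
          have hkey : (m : ℕ) + 1 ≤ (m' : ℕ) := by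
            apply hstep hmlt
            have : (⟨(m : ℕ), hmlt⟩ : Fin as.length) = ⟨t', ht1⟩ := Fin.mk_eq_mk.mpr (by omega)
            rw [this]; exact hgetc
          omega
        · have : t' + 1 ≤ (m : ℕ) := by omega
          omega

end AuxUp


/-- Fix `k ≥ 1` and letters `a₁,…,a_k` with `aᵢ ≠ aᵢ₊₁`.  For a word
`w = w₁⋯w_n` let `π := e₁ · P↗(w₁) ⋯ P↗(w_n)` (where `P↗(c)` is the identity matrix
for letters `c` not occurring in `a₁⋯a_k`).  Then (1) if
`w ∈ L[a₁,…,a_k] = Σ* a₁ Σ* ⋯ Σ* a_k Σ*` then every coordinate of `π` is positive,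
and (2) for all `1 ≤ j ≤ i ≤ k+1`, if `(π)ᵢ > 0` then `(π)ⱼ ≥ 2^{−k}`. -/
theorem up_projector_amplitudes
    (σ : Type) [DecidableEq σ] (as : List σ) (hne : as ≠ [])
    (hchain : as.Chain' (· ≠ ·)) (w : List σ) :
    (as.Sublist w → ∀ i : Fin (as.length + 1), 0 < upState as w 0 i) ∧
    (∀ i j : Fin (as.length + 1), j ≤ i → 0 < upState as w 0 i →
      upState as w 0 j ≥ (2 : ℝ) ^ (-(as.length : ℤ))) := by
  obtain ⟨m, hmono, hzero, hlow, hnn, hgreedy⟩ := main_inv as hchain w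
  constructor
  · intro hsub i
    have hm : (m : ℕ) = as.length :=
      le_antisymm (Fin.is_le m)
        (hgreedy as.length le_rfl (by rwa [List.take_length]))
    have him : i ≤ m := by rw [Fin.le_def, hm]; exact Fin.is_le i
    have hvm : upState as w 0 m ≤ upState as w 0 i := hmono i m him
    have hpos : (0 : ℝ) < (2 : ℝ) ^ (-(m : ℤ)) := by positivity
    linarith
  · intro i j hji hpos
    have him : i ≤ m := by
      by_contra h
      push_neg at h
      rw [hzero i h] at hpos
      exact lt_irrefl 0 hpos
    have hvm : upState as w 0 m ≤ upState as w 0 j := hmono j m (hji.trans him)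
    have hmk : (2 : ℝ) ^ (-(as.length : ℤ)) ≤ (2 : ℝ) ^ (-(m : ℤ)) := by
      apply zpow_le_zpow_right₀ one_le_two
      have := Fin.is_le m
      omega
    linarith
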